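/- Let H = (V,E) be a finite hypergraph on n vertices, let t ≥ 1 be an integer and let ε ∈ (0,1) satisfy n ≥ 2t/ε. Then every (ε/2)^t-net for the hypergraph H^t, regarded as a family of t-element subsets of V, is an ε-t-net for H. -/

import Mathlib

/-- `S` is an `ε`-`t`-net for the hypergraph with vertex set `V` and hyperedges `E`. -/
def IsEpsTNet {V : Type*} [Fintype V] (E : Finset (Finset V)) (ε : ℝ) (t : ℕ)
    (S : Finset (Finset V)) : Prop :=
  (∀ s ∈ S, s.card = t) ∧
  ∀ e ∈ E, ε * (Fintype.card V : ℝ) ≤ (e.card : ℝ) → ∃ s ∈ S, s ⊆ e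

/-- The hyperedge family of the hypergraph `H^t`: its vertices are the `t`-element
subsets of `V`, and each hyperedge of `H` gives rise to the hyperedge consisting of all
its `t`-element subsets. -/
def HtEdges {V : Type*} [Fintype V] [DecidableEq V] (E : Finset (Finset V)) (t : ℕ) :
    Finset (Finset {s : Finset V // s.card = t}) :=
  E.image (fun e => Finset.univ.filter (fun s : {s : Finset V // s.card = t} => s.1 ⊆ e))

lemma key_choose_ineq (m n t : ℕ) (ε : ℝ) (hε0 : 0 < ε) (hε1 : ε ≤ 1)
    (h1 : ε * n ≤ m) (h2 : 2 * (t : ℝ) ≤ ε * n) :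
    (ε / 2) ^ t * (n.choose t : ℝ) ≤ (m.choose t : ℝ) := by
  have hfact : (0 : ℝ) < (t.factorial : ℝ) := by positivity
  have htn : (t : ℝ) ≤ (n : ℝ) := by nlinarith [Nat.cast_nonneg (α := ℝ) t]
  have htm : (t : ℝ) ≤ (m : ℝ) := by nlinarith
  have htn' : t ≤ n := by exact_mod_cast htn
  have htm' : t ≤ m := by exact_mod_cast htm
  -- descFactorial inequality
  have hdesc : (ε / 2) ^ t * (n.descFactorial t : ℝ) ≤ (m.descFactorial t : ℝ) := by
    rw [Nat.descFactorial_eq_prod_range, Nat.descFactorial_eq_prod_range]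
    push_cast
    have hc : ∀ i ∈ Finset.range t, ((n - i : ℕ) : ℝ) = (n : ℝ) - i := by
      intro i hi
      have : i ≤ n := le_trans (le_of_lt (Finset.mem_range.mp hi)) htn'
      push_cast [this]; ring
    have hc' : ∀ i ∈ Finset.range t, ((m - i : ℕ) : ℝ) = (m : ℝ) - i := by
      intro i hi
      have : i ≤ m := le_trans (le_of_lt (Finset.mem_range.mp hi)) htm'
      push_cast [this]; ring
    rw [Finset.prod_congr rfl hc, Finset.prod_congr rfl hc']
    have hpow : (ε / 2) ^ t = ∏ _i ∈ Finset.range t, (ε / 2) := by rw [Finset.prod_const, Finset.card_range]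
    rw [hpow, ← Finset.prod_mul_distrib]
    apply Finset.prod_le_prod
    · intro i hi
      have hi' : (i : ℝ) < t := by exact_mod_cast Finset.mem_range.mp hi
      have : (i : ℝ) ≤ (n : ℝ) := le_trans hi'.le htn
      nlinarith
    · intro i hi
      have hi' : (i : ℝ) + 1 ≤ t := by exact_mod_cast Finset.mem_range.mp hi
      nlinarith [Nat.cast_nonneg (α := ℝ) i]
  have heq1 : (n.descFactorial t : ℝ) = (t.factorial : ℝ) * (n.choose t : ℝ) := by
    exact_mod_cast congrArg (Nat.cast (R := ℝ)) (Nat.descFactorial_eq_factorial_mul_choose n t)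
  have heq2 : (m.descFactorial t : ℝ) = (t.factorial : ℝ) * (m.choose t : ℝ) := by
    exact_mod_cast congrArg (Nat.cast (R := ℝ)) (Nat.descFactorial_eq_factorial_mul_choose m t)
  rw [heq1, heq2] at hdesc
  calc (ε / 2) ^ t * (n.choose t : ℝ)
      = (ε / 2) ^ t * ((t.factorial : ℝ) * (n.choose t : ℝ)) / (t.factorial : ℝ) := by
        field_simp
    _ ≤ (t.factorial : ℝ) * (m.choose t : ℝ) / (t.factorial : ℝ) := by
        gcongr
    _ = (m.choose t : ℝ) := by field_simp

theorem eps_net_of_Ht_is_eps_t_net {V : Type*} [Fintype V] [DecidableEq V]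
    (E : Finset (Finset V)) (t : ℕ) (ht : 1 ≤ t) (ε : ℝ) (hε : ε ∈ Set.Ioo (0 : ℝ) 1)
    (hn : 2 * (t : ℝ) / ε ≤ (Fintype.card V : ℝ))
    (N : Finset {s : Finset V // s.card = t})
    (hN : ∀ e' ∈ HtEdges E t,
      (ε / 2) ^ t * (Fintype.card {s : Finset V // s.card = t} : ℝ) ≤ (e'.card : ℝ) →
      ∃ s ∈ N, s ∈ e') :
    IsEpsTNet E ε t (N.image (fun s => s.1)) := by
  obtain ⟨hε0, hε1⟩ := hε
  constructor
  · intro s hs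
    obtain ⟨a, _, rfl⟩ := Finset.mem_image.mp hs
    exact a.2
  · intro e he hcard
    set n := Fintype.card V with hn_def
    have h2 : 2 * (t : ℝ) ≤ ε * n := by
      rw [div_le_iff₀ hε0] at hn; nlinarith
    -- cardinality of the edge in H^t
    have hE' : (Finset.univ.filter (fun s : {s : Finset V // s.card = t} => s.1 ⊆ e)) ∈
        HtEdges E t := Finset.mem_image_of_mem _ he
    have hcard_edge : (Finset.univ.filter
        (fun s : {s : Finset V // s.card = t} => s.1 ⊆ e)).card = e.card.choose t := by
      rw [← Finset.card_powersetCard t e]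
      apply Finset.card_bij (fun s _ => s.1)
      · intro a ha
        rw [Finset.mem_powersetCard]
        exact ⟨(Finset.mem_filter.mp ha).2, a.2⟩
      · intro a _ b _ h; exact Subtype.ext h
      · intro b hb
        rw [Finset.mem_powersetCard] at hb
        exact ⟨⟨b, hb.2⟩, by simp [hb.1], rfl⟩
    have hcardV : (Fintype.card {s : Finset V // s.card = t} : ℕ) = n.choose t := by
      exact Fintype.card_finset_len (α := V) t
    have hineq : (ε / 2) ^ t * (Fintype.card {s : Finset V // s.card = t} : ℝ) ≤
        ((Finset.univ.filter (fun s : {s : Finset V // s.card = t} => s.1 ⊆ e)).card : ℝ) := by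
      rw [hcardV, hcard_edge]
      exact key_choose_ineq e.card n t ε hε0 hε1.le hcard h2
    obtain ⟨s, hsN, hs⟩ := hN _ hE' hineq
    exact ⟨s.1, Finset.mem_image_of_mem _ hsN, (Finset.mem_filter.mp hs).2⟩
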